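/- (Horn–Tarski) If f is a measure on a Boolean subalgebra B_0 of a Boolean algebra B, then the interior measure satisfies f_i(x) = sup{f(y) : y ∈ B_0, y ≤ x} and the exterior measure satisfies f_e(x) = inf{f(y) : y ∈ B_0, x ≤ y}, for every x ∈ B. -/

import Mathlib

/-- Meet of all elements of a list. -/
def meetAll {B : Type*} [BooleanAlgebra B] (l : List B) : B := l.foldr (· ⊓ ·) ⊤

/-- Join of all `k`-fold meets of (increasing) `k`-element sublists of `l`. -/
def kJoin {B : Type*} [BooleanAlgebra B] (k : ℕ) (l : List B) : B :=
  ((l.sublistsLen k).map meetAll).foldr (· ⊔ ·) ⊥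

/-- Horn–Tarski order on sequences: `⟨A_0,…,A_{m−1}⟩ ≤ ⟨B_0,…,B_{n−1}⟩` iff for every
`k < m` the join of all `(k+1)`-fold meets of the `A`'s is below the analogous join for
the `B`'s. -/
def seqLE {B : Type*} [BooleanAlgebra B] (as bs : List B) : Prop :=
  ∀ k : ℕ, k < as.length → kJoin (k + 1) as ≤ kJoin (k + 1) bs

/-- Horn–Tarski partial measure on a subset `S` containing `⊤`. -/
def IsPartialMeasure {B : Type*} [BooleanAlgebra B] (f : B → ℝ) (S : Set B) : Prop :=
  (⊤ : B) ∈ S ∧ f ⊤ = 1 ∧ (∀ x ∈ S, 0 ≤ f x) ∧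
  ∀ as bs : List B, (∀ x ∈ as, x ∈ S) → (∀ x ∈ bs, x ∈ S) → seqLE as bs →
    (as.map f).sum ≤ (bs.map f).sum

/-- Horn–Tarski exterior measure of `x` with respect to a partial measure `f` on `S`. -/
noncomputable def extMeasure {B : Type*} [BooleanAlgebra B] (f : B → ℝ) (S : Set B)
    (x : B) : ℝ :=
  sInf {ξ : ℝ | ∃ (m : ℕ) (as bs : List B), 0 < m ∧ (∀ y ∈ as, y ∈ S) ∧
    (∀ y ∈ bs, y ∈ S) ∧ seqLE (bs ++ List.replicate m x) as ∧
    ξ = ((as.map f).sum - (bs.map f).sum) / m}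

/-- Horn–Tarski interior measure of `x` with respect to a partial measure `f` on `S`. -/
noncomputable def intMeasure {B : Type*} [BooleanAlgebra B] (f : B → ℝ) (S : Set B)
    (x : B) : ℝ :=
  sSup {ξ : ℝ | ∃ (m : ℕ) (as bs : List B), 0 < m ∧ (∀ y ∈ as, y ∈ S) ∧
    (∀ y ∈ bs, y ∈ S) ∧ seqLE as (bs ++ List.replicate m x) ∧
    ξ = ((as.map f).sum - (bs.map f).sum) / m}

/-- `S` is the carrier of a Boolean subalgebra. -/
def IsSubalgebraSet {B : Type*} [BooleanAlgebra B] (S : Set B) : Prop :=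
  (⊤ : B) ∈ S ∧ (⊥ : B) ∈ S ∧ (∀ x ∈ S, xᶜ ∈ S) ∧
  (∀ x ∈ S, ∀ y ∈ S, x ⊓ y ∈ S) ∧ (∀ x ∈ S, ∀ y ∈ S, x ⊔ y ∈ S)

/-- `m` restricts to a normalized measure on the subset `S`. -/
def IsMeasureOn {B : Type*} [BooleanAlgebra B] (m : B → ℝ) (S : Set B) : Prop :=
  (∀ x ∈ S, 0 ≤ m x) ∧
  (∀ x ∈ S, ∀ y ∈ S, x ⊓ y = ⊥ → m (x ⊔ y) = m x + m y) ∧ m ⊤ = 1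


namespace HT
attribute [local instance] Classical.propDecidable
variable {B : Type*} [BooleanAlgebra B]

lemma foldr_sup_append (l₁ l₂ : List B) :
    (l₁ ++ l₂).foldr (· ⊔ ·) ⊥ = l₁.foldr (· ⊔ ·) ⊥ ⊔ l₂.foldr (· ⊔ ·) ⊥ := by
  induction l₁ with
  | nil => simp
  | cons a l ih => simp [ih, sup_assoc]

lemma inf_foldr_sup (a : B) (L : List B) :
    (L.map (a ⊓ ·)).foldr (· ⊔ ·) ⊥ = a ⊓ L.foldr (· ⊔ ·) ⊥ := by
  induction L with
  | nil => simp
  | cons b L ih => simp [ih, inf_sup_left]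

lemma kJoin_zero (l : List B) : kJoin 0 l = ⊤ := by
  simp [kJoin, meetAll]

lemma kJoin_succ_cons (k : ℕ) (a : B) (l : List B) :
    kJoin (k + 1) (a :: l) = kJoin (k + 1) l ⊔ (a ⊓ kJoin k l) := by
  unfold kJoin
  rw [List.sublistsLen_succ_cons, List.map_append, foldr_sup_append, List.map_map]
  congr 1
  have : meetAll ∘ List.cons a = (a ⊓ ·) ∘ meetAll := by
    funext s; simp [meetAll]
  rw [this, ← List.map_map, inf_foldr_sup]

lemma kJoin_eq_bot {k : ℕ} {l : List B} (h : l.length < k) : kJoin k l = ⊥ := by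
  unfold kJoin
  rw [List.sublistsLen_of_length_lt h]
  simp

lemma kJoin_succ_le (k : ℕ) (l : List B) : kJoin (k + 1) l ≤ kJoin k l := by
  induction l generalizing k with
  | nil => rw [kJoin_eq_bot (by simp)]; exact bot_le
  | cons a l ih =>
    cases k with
    | zero => rw [kJoin_zero]; exact le_top
    | succ j =>
      rw [kJoin_succ_cons, kJoin_succ_cons]
      exact sup_le_sup (ih _) (inf_le_inf_left _ (ih _))

lemma meetAll_cons (a : B) (s : List B) : meetAll (a :: s) = a ⊓ meetAll s := rfl

lemma le_meetAll {q : B} {s : List B} : q ≤ meetAll s ↔ ∀ y ∈ s, q ≤ y := by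
  induction s with
  | nil => simp [meetAll]
  | cons a s ih => rw [meetAll_cons, le_inf_iff, ih]; simp_all

lemma atom_le_sup {q a b : B} (hq : IsAtom q) : q ≤ a ⊔ b ↔ q ≤ a ∨ q ≤ b := by
  constructor
  · intro h
    by_contra hc
    push_neg at hc
    have ha : q ⊓ a = ⊥ := hq.2 _ (lt_of_le_of_ne inf_le_left (fun he => hc.1 (inf_eq_left.mp he)))
    have hb : q ⊓ b = ⊥ := hq.2 _ (lt_of_le_of_ne inf_le_left (fun he => hc.2 (inf_eq_left.mp he)))
    have : q = ⊥ := by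
      have : q = q ⊓ (a ⊔ b) := (inf_eq_left.mpr h).symm
      rw [inf_sup_left, ha, hb, bot_sup_eq] at this
      exact this
    exact hq.1 this
  · rintro (h | h)
    · exact h.trans le_sup_left
    · exact h.trans le_sup_right

lemma atom_le_compl {q s : B} (hq : IsAtom q) (h : ¬ q ≤ s) : q ≤ sᶜ := by
  have h2 : q ⊓ s = ⊥ := hq.2 _ (lt_of_le_of_ne inf_le_left (fun he => h (inf_eq_left.mp he)))
  have : q = q ⊓ sᶜ := by
    have h3 : q = q ⊓ (s ⊔ sᶜ) := by simp
    rwa [inf_sup_left, h2, bot_sup_eq] at h3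
  rw [this]; exact inf_le_right

lemma atom_le_foldr_sup {q : B} (hq : IsAtom q) (L : List B) :
    q ≤ L.foldr (· ⊔ ·) ⊥ ↔ ∃ y ∈ L, q ≤ y := by
  induction L with
  | nil => simpa using fun h => hq.1 (le_bot_iff.mp h)
  | cons a L ih => simp [atom_le_sup hq, ih]

lemma atom_le_kJoin {q : B} (hq : IsAtom q) (k : ℕ) (l : List B) :
    q ≤ kJoin k l ↔ k ≤ l.countP (fun a => decide (q ≤ a)) := by
  unfold kJoin
  rw [atom_le_foldr_sup hq]
  constructor
  · rintro ⟨y, hy, hqy⟩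
    obtain ⟨s, hs, rfl⟩ := List.mem_map.mp hy
    obtain ⟨hsub, hlen⟩ := List.mem_sublistsLen.mp hs
    have hall : ∀ a ∈ s, (fun a => decide (q ≤ a)) a = true := by
      intro a ha; simpa using le_meetAll.mp hqy a ha
    calc k = s.length := hlen.symm
      _ = s.countP (fun a => decide (q ≤ a)) := (List.countP_eq_length.mpr hall).symm
      _ ≤ _ := hsub.countP_le
  · intro hk
    set P : B → Bool := fun a => decide (q ≤ a) with hP
    refine ⟨meetAll ((l.filter P).take k), List.mem_map.mpr
      ⟨(l.filter P).take k, List.mem_sublistsLen.mpr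
        ⟨(List.take_sublist _ _).trans List.filter_sublist, ?_⟩, rfl⟩, ?_⟩
    · rw [List.length_take, ← List.countP_eq_length_filter]
      exact min_eq_left hk
    · refine le_meetAll.mpr fun y hy => ?_
      have := List.mem_filter.mp (List.mem_of_mem_take hy)
      simpa [hP] using this.2

lemma le_of_atoms [Fintype B] {a b : B} (h : ∀ q, IsAtom q → q ≤ a → q ≤ b) : a ≤ b := by
  by_contra hab
  have hne : a \ b ≠ ⊥ := fun he => hab (sdiff_eq_bot_iff.mp he)
  have : IsAtomic B := Finite.to_isAtomic
  obtain ⟨q, hq, hle⟩ := (eq_bot_or_exists_atom_le (a \ b)).resolve_left hne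
  have hqa : q ≤ a := hle.trans sdiff_le
  have hqb : q ≤ b := h q hq hqa
  exact hq.1 (le_bot_iff.mp (disjoint_sdiff_self_left hle hqb))

section Measure
variable {S : Set B} {f : B → ℝ}

lemma memS_top (hS : IsSubalgebraSet S) : (⊤ : B) ∈ S := hS.1
lemma memS_bot (hS : IsSubalgebraSet S) : (⊥ : B) ∈ S := hS.2.1
lemma memS_compl (hS : IsSubalgebraSet S) {a : B} (h : a ∈ S) : aᶜ ∈ S := hS.2.2.1 a h
lemma memS_inf (hS : IsSubalgebraSet S) {a b : B} (ha : a ∈ S) (hb : b ∈ S) : a ⊓ b ∈ S :=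
  hS.2.2.2.1 a ha b hb
lemma memS_sup (hS : IsSubalgebraSet S) {a b : B} (ha : a ∈ S) (hb : b ∈ S) : a ⊔ b ∈ S :=
  hS.2.2.2.2 a ha b hb

lemma f_bot (hS : IsSubalgebraSet S) (hf : IsMeasureOn f S) : f ⊥ = 0 := by
  have := hf.2.1 ⊤ (memS_top hS) ⊥ (memS_bot hS) (by simp)
  simp at this
  linarith [this]

lemma f_mono (hS : IsSubalgebraSet S) (hf : IsMeasureOn f S) {y z : B}
    (hy : y ∈ S) (hz : z ∈ S) (h : y ≤ z) : f y ≤ f z := by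
  have hmem : z ⊓ yᶜ ∈ S := memS_inf hS hz (memS_compl hS hy)
  have hadd := hf.2.1 y hy (z ⊓ yᶜ) hmem (by rw [← inf_assoc, inf_comm y z, inf_assoc]; simp)
  have heq : y ⊔ z ⊓ yᶜ = z := by
    rw [sup_inf_left]; simp [sup_eq_right.mpr h]
  rw [heq] at hadd
  have := hf.1 _ hmem
  linarith

lemma f_sup (hS : IsSubalgebraSet S) (hf : IsMeasureOn f S) {u v : B}
    (hu : u ∈ S) (hv : v ∈ S) : f (u ⊔ v) = f u + f v - f (u ⊓ v) := by
  have hmem : v ⊓ uᶜ ∈ S := memS_inf hS hv (memS_compl hS hu)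
  have h1 : f (u ⊔ v ⊓ uᶜ) = f u + f (v ⊓ uᶜ) :=
    hf.2.1 u hu _ hmem (by rw [← inf_assoc, inf_comm u v, inf_assoc]; simp)
  have h2 : f (v ⊓ u ⊔ v ⊓ uᶜ) = f (v ⊓ u) + f (v ⊓ uᶜ) :=
    hf.2.1 _ (memS_inf hS hv hu) _ hmem
      (eq_bot_iff.mpr (le_trans (inf_le_inf inf_le_right inf_le_right) (by simp)))
  have e1 : u ⊔ v ⊓ uᶜ = u ⊔ v := by rw [sup_inf_left]; simp
  have e2 : v ⊓ u ⊔ v ⊓ uᶜ = v := by rw [← inf_sup_left]; simp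
  rw [e1] at h1; rw [e2] at h2
  rw [inf_comm u v]; linarith

lemma memS_meetAll (hS : IsSubalgebraSet S) {l : List B} (hl : ∀ a ∈ l, a ∈ S) :
    meetAll l ∈ S := by
  induction l with
  | nil => exact memS_top hS
  | cons a l ih =>
    rw [meetAll_cons]
    exact memS_inf hS (hl a (by simp)) (ih fun b hb => hl b (by simp [hb]))

lemma memS_kJoin (hS : IsSubalgebraSet S) {k : ℕ} {l : List B} (hl : ∀ a ∈ l, a ∈ S) :
    kJoin k l ∈ S := by
  unfold kJoin
  have : ∀ L : List B, (∀ a ∈ L, a ∈ S) → L.foldr (· ⊔ ·) ⊥ ∈ S := by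
    intro L
    induction L with
    | nil => intro _; exact memS_bot hS
    | cons a L ih =>
      intro h
      exact memS_sup hS (h a (by simp)) (ih fun b hb => h b (by simp [hb]))
  refine this _ ?_
  intro a ha
  obtain ⟨s, hs, rfl⟩ := List.mem_map.mp ha
  exact memS_meetAll hS fun b hb => hl b ((List.mem_sublistsLen.mp hs).1.subset hb)

lemma sum_eq_kJoin_sum (hS : IsSubalgebraSet S) (hf : IsMeasureOn f S)
    {l : List B} (hl : ∀ a ∈ l, a ∈ S) :
    (l.map f).sum = ∑ k ∈ Finset.range l.length, f (kJoin (k + 1) l) := by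
  induction l with
  | nil => simp
  | cons a l ih =>
    have haS : a ∈ S := hl a (by simp)
    have hlS : ∀ b ∈ l, b ∈ S := fun b hb => hl b (by simp [hb])
    have hterm : ∀ k : ℕ, f (kJoin (k + 1) (a :: l)) =
        f (kJoin (k + 1) l) + (f (a ⊓ kJoin k l) - f (a ⊓ kJoin (k + 1) l)) := by
      intro k
      rw [kJoin_succ_cons]
      have hm1 : kJoin (k + 1) l ∈ S := memS_kJoin hS hlS
      have hm2 : a ⊓ kJoin k l ∈ S := memS_inf hS haS (memS_kJoin hS hlS)
      rw [f_sup hS hf hm1 hm2]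
      have : kJoin (k + 1) l ⊓ (a ⊓ kJoin k l) = a ⊓ kJoin (k + 1) l := by
        rw [inf_comm (kJoin (k+1) l), inf_assoc]
        congr 1
        exact inf_eq_right.mpr (kJoin_succ_le k l)
      rw [this]; ring
    rw [List.map_cons, List.sum_cons, ih hlS]
    simp only [List.length_cons]
    rw [Finset.sum_congr rfl fun k _ => hterm k, Finset.sum_add_distrib]
    rw [Finset.sum_range_sub' (fun k => f (a ⊓ kJoin k l))]
    rw [Finset.sum_range_succ]
    rw [kJoin_eq_bot (Nat.lt_succ_self l.length), kJoin_zero, f_bot hS hf]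
    simp [f_bot hS hf]
    ring

lemma sum_eq_kJoin_sum' (hS : IsSubalgebraSet S) (hf : IsMeasureOn f S)
    {l : List B} (hl : ∀ a ∈ l, a ∈ S) {N : ℕ} (hN : l.length ≤ N) :
    (l.map f).sum = ∑ k ∈ Finset.range N, f (kJoin (k + 1) l) := by
  rw [sum_eq_kJoin_sum hS hf hl]
  refine Finset.sum_subset (Finset.range_subset_range.mpr hN) ?_
  intro k _ hk
  rw [Finset.mem_range, not_lt] at hk
  rw [kJoin_eq_bot (Nat.lt_succ_of_le hk), f_bot hS hf]

lemma partial_measure (hS : IsSubalgebraSet S) (hf : IsMeasureOn f S)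
    {as cs : List B} (has : ∀ a ∈ as, a ∈ S) (hcs : ∀ a ∈ cs, a ∈ S)
    (h : seqLE as cs) : (as.map f).sum ≤ (cs.map f).sum := by
  set N := max as.length cs.length with hN
  rw [sum_eq_kJoin_sum' hS hf has (le_max_left _ _),
      sum_eq_kJoin_sum' hS hf hcs (le_max_right _ _)]
  refine Finset.sum_le_sum fun k _ => ?_
  by_cases hk : k < as.length
  · exact f_mono hS hf (memS_kJoin hS has) (memS_kJoin hS hcs) (h k hk)
  · rw [not_lt] at hk
    rw [kJoin_eq_bot (Nat.lt_succ_of_le hk), f_bot hS hf]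
    exact hf.1 _ (memS_kJoin hS hcs)

end Measure
section Transfer
variable {S : Set B} {f : B → ℝ}

lemma finset_inf_mem (hS : IsSubalgebraSet S) (t : Finset B) (ht : ∀ a ∈ t, a ∈ S) :
    t.inf id ∈ S := by
  classical
  induction t using Finset.induction_on with
  | empty => simpa using memS_top hS
  | insert _ _ hnot ih =>
    rw [Finset.inf_insert]
    exact memS_inf hS (ht _ (Finset.mem_insert_self _ _))
      (ih fun a ha => ht a (Finset.mem_insert_of_mem ha))

lemma finset_sup_mem (hS : IsSubalgebraSet S) (t : Finset B) (ht : ∀ a ∈ t, a ∈ S) :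
    t.sup id ∈ S := by
  classical
  induction t using Finset.induction_on with
  | empty => simpa using memS_bot hS
  | insert _ _ hnot ih =>
    rw [Finset.sup_insert]
    exact memS_sup hS (ht _ (Finset.mem_insert_self _ _))
      (ih fun a ha => ht a (Finset.mem_insert_of_mem ha))

variable [Fintype B]

/-- the smallest element of `S` above `q` -/
lemma exists_pi (hS : IsSubalgebraSet S) (q : B) :
    ∃ p, p ∈ S ∧ q ≤ p ∧ ∀ s ∈ S, q ≤ s → p ≤ s := by
  classical
  set t : Finset B := Finset.univ.filter (fun s => s ∈ S ∧ q ≤ s) with hT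
  refine ⟨t.inf id, finset_inf_mem hS t (fun a ha => ((Finset.mem_filter.mp ha).2).1), ?_, ?_⟩
  · exact Finset.le_inf fun b hb => ((Finset.mem_filter.mp hb).2).2
  · intro s hs hqs
    exact Finset.inf_le (Finset.mem_filter.mpr ⟨Finset.mem_univ _, hs, hqs⟩)

lemma exists_ystar (hS : IsSubalgebraSet S) (x : B) :
    ∃ p, p ∈ S ∧ p ≤ x ∧ ∀ y ∈ S, y ≤ x → y ≤ p := by
  classical
  set t : Finset B := Finset.univ.filter (fun s => s ∈ S ∧ s ≤ x) with hT
  refine ⟨t.sup id, finset_sup_mem hS t (fun a ha => ((Finset.mem_filter.mp ha).2).1), ?_, ?_⟩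
  · exact Finset.sup_le fun b hb => ((Finset.mem_filter.mp hb).2).2
  · intro y hy hyx
    exact Finset.le_sup (f := id) (show y ∈ t from Finset.mem_filter.mpr ⟨Finset.mem_univ _, hy, hyx⟩)

lemma exists_ylow (hS : IsSubalgebraSet S) (x : B) :
    ∃ p, p ∈ S ∧ x ≤ p ∧ ∀ y ∈ S, x ≤ y → p ≤ y := by
  classical
  set t : Finset B := Finset.univ.filter (fun s => s ∈ S ∧ x ≤ s) with hT
  refine ⟨t.inf id, finset_inf_mem hS t (fun a ha => ((Finset.mem_filter.mp ha).2).1), ?_, ?_⟩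
  · exact Finset.le_inf fun b hb => ((Finset.mem_filter.mp hb).2).2
  · intro y hy hxy
    exact Finset.inf_le (Finset.mem_filter.mpr ⟨Finset.mem_univ _, hy, hxy⟩)

/-- two atoms below the same `S`-atom agree on `S` -/
lemma atoms_agree (hS : IsSubalgebraSet S) {q q' p : B} (hq : IsAtom q) (hq' : IsAtom q')
    (hqp : q ≤ p) (hpmin : ∀ s ∈ S, q ≤ s → p ≤ s) (hq'p : q' ≤ p) :
    ∀ s ∈ S, (q ≤ s ↔ q' ≤ s) := by
  intro s hs
  constructor
  · intro h; exact hq'p.trans (hpmin s hs h)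
  · intro h
    by_contra hqs
    have h1 : q ≤ sᶜ := atom_le_compl hq hqs
    have h2 : p ≤ sᶜ := hpmin sᶜ (memS_compl hS hs) h1
    have : q' ≤ s ⊓ sᶜ := le_inf h (hq'p.trans h2)
    rw [inf_compl_eq_bot] at this
    exact hq'.1 (le_bot_iff.mp this)

lemma cnt_congr {q q' : B} {l : List B} (hl : ∀ a ∈ l, a ∈ S)
    (h : ∀ s ∈ S, (q ≤ s ↔ q' ≤ s)) :
    l.countP (fun a => decide (q ≤ a)) = l.countP (fun a => decide (q' ≤ a)) :=
  List.countP_congr fun a ha => by simpa using h a (hl a ha)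

lemma cnt_append_replicate (q y : B) (bs : List B) (m : ℕ) :
    (bs ++ List.replicate m y).countP (fun a => decide (q ≤ a)) =
      bs.countP (fun a => decide (q ≤ a)) + if q ≤ y then m else 0 := by
  rw [List.countP_append, List.countP_replicate]
  simp

lemma transfer_int (hS : IsSubalgebraSet S) {as bs : List B} {m : ℕ} {x ys : B}
    (has : ∀ a ∈ as, a ∈ S) (hbs : ∀ a ∈ bs, a ∈ S)
    (hysS : ys ∈ S) (hysle : ys ≤ x) (hmax : ∀ y ∈ S, y ≤ x → y ≤ ys)
    (h : seqLE as (bs ++ List.replicate m x)) :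
    seqLE as (bs ++ List.replicate m ys) := by
  intro k hk
  refine le_of_atoms fun q hq hqle => ?_
  rw [atom_le_kJoin hq, cnt_append_replicate]
  by_cases hqy : q ≤ ys
  · have hcnt := (atom_le_kJoin hq _ _).mp ((h k hk).trans' hqle)
    rw [cnt_append_replicate, if_pos (hqy.trans hysle)] at hcnt
    rwa [if_pos hqy]
  · rw [if_neg hqy, add_zero]
    obtain ⟨p, hpS, hqp, hpmin⟩ := exists_pi hS q
    have hpx : ¬ p ≤ x := fun hh => hqy (hqp.trans (hmax p hpS hh))
    have hne : p ⊓ xᶜ ≠ ⊥ := by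
      intro he
      exact hpx (sdiff_eq_bot_iff.mp (by rwa [sdiff_eq]))
    have : IsAtomic B := Finite.to_isAtomic
    obtain ⟨q', hq', hle⟩ := (eq_bot_or_exists_atom_le (p ⊓ xᶜ)).resolve_left hne
    have hagree := atoms_agree hS hq hq' hqp hpmin (hle.trans inf_le_left)
    have hq'x : ¬ q' ≤ x := by
      intro hh
      have : q' ≤ x ⊓ xᶜ := le_inf hh (hle.trans inf_le_right)
      rw [inf_compl_eq_bot] at this
      exact hq'.1 (le_bot_iff.mp this)
    have hq'as : q' ≤ kJoin (k + 1) as := by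
      rw [atom_le_kJoin hq', ← cnt_congr has hagree]
      exact (atom_le_kJoin hq _ _).mp hqle
    have hcnt := (atom_le_kJoin hq' _ _).mp ((h k hk).trans' hq'as)
    rw [cnt_append_replicate, if_neg hq'x, add_zero, ← cnt_congr hbs hagree] at hcnt
    exact hcnt

lemma transfer_ext (hS : IsSubalgebraSet S) {as bs : List B} {m : ℕ} {x yl : B}
    (has : ∀ a ∈ as, a ∈ S) (hbs : ∀ a ∈ bs, a ∈ S)
    (hylS : yl ∈ S) (hyle : x ≤ yl) (hmin : ∀ y ∈ S, x ≤ y → yl ≤ y)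
    (h : seqLE (bs ++ List.replicate m x) as) :
    seqLE (bs ++ List.replicate m yl) as := by
  intro k hk
  have hk' : k < (bs ++ List.replicate m x).length := by
    simpa using hk
  refine le_of_atoms fun q hq hqle => ?_
  rw [atom_le_kJoin hq, cnt_append_replicate] at hqle
  by_cases hqx : q ≤ x
  · refine (h k hk').trans' ?_
    rw [atom_le_kJoin hq, cnt_append_replicate, if_pos hqx]
    split_ifs at hqle <;> omega
  · by_cases hqy : q ≤ yl
    · obtain ⟨p, hpS, hqp, hpmin⟩ := exists_pi hS q
      have hne : p ⊓ x ≠ ⊥ := by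
        intro he
        have hxpc : x ≤ pᶜ := by
          have hd : Disjoint x p := disjoint_iff.mpr (by rwa [inf_comm] at he)
          exact hd.le_compl_right
        have : yl ≤ pᶜ := hmin pᶜ (memS_compl hS hpS) hxpc
        have : q ≤ p ⊓ pᶜ := le_inf hqp (hqy.trans this)
        rw [inf_compl_eq_bot] at this
        exact hq.1 (le_bot_iff.mp this)
      have : IsAtomic B := Finite.to_isAtomic
      obtain ⟨q', hq', hle⟩ := (eq_bot_or_exists_atom_le (p ⊓ x)).resolve_left hne
      have hagree := atoms_agree hS hq hq' hqp hpmin (hle.trans inf_le_left)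
      have hq'x : q' ≤ x := hle.trans inf_le_right
      have hq'le : q' ≤ kJoin (k + 1) (bs ++ List.replicate m x) := by
        rw [atom_le_kJoin hq', cnt_append_replicate, if_pos hq'x,
            ← cnt_congr hbs hagree]
        rw [if_pos hqy] at hqle
        exact hqle
      have := (h k hk').trans' hq'le
      rw [atom_le_kJoin hq', ← cnt_congr has hagree] at this
      rwa [atom_le_kJoin hq]
    · rw [if_neg hqy, add_zero] at hqle
      refine (h k hk').trans' ?_
      rw [atom_le_kJoin hq, cnt_append_replicate]
      omega

end Transfer
lemma kJoin_one_singleton (a : B) : kJoin 1 [a] = a := by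
  simp [kJoin, List.sublistsLen_succ_cons, meetAll]

end HT

/-- Horn–Tarski: if `f` is a measure on a Boolean subalgebra `B_0` (carrier `S`) of a
finite Boolean algebra `B`, then the interior measure of `x` is `sup{f y : y ∈ S, y ≤ x}`
and the exterior measure is `inf{f y : y ∈ S, x ≤ y}`. -/
theorem stmt15 (B : Type*) [BooleanAlgebra B] [Fintype B] (S : Set B)
    (hS : IsSubalgebraSet S) (f : B → ℝ) (hf : IsMeasureOn f S) (x : B) :
    intMeasure f S x = sSup {r : ℝ | ∃ y ∈ S, y ≤ x ∧ r = f y} ∧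
    extMeasure f S x = sInf {r : ℝ | ∃ y ∈ S, x ≤ y ∧ r = f y} := by
  constructor
  · obtain ⟨ys, hysS, hysle, hmax⟩ := HT.exists_ystar hS x
    have hub1 : ∀ r ∈ {r : ℝ | ∃ y ∈ S, y ≤ x ∧ r = f y}, r ≤ f ys := by
      rintro r ⟨y, hy, hyx, rfl⟩
      exact HT.f_mono hS hf hy hysS (hmax y hy hyx)
    have hmem1 : f ys ∈ {r : ℝ | ∃ y ∈ S, y ≤ x ∧ r = f y} := ⟨ys, hysS, hysle, rfl⟩
    have h1 : sSup {r : ℝ | ∃ y ∈ S, y ≤ x ∧ r = f y} = f ys :=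
      le_antisymm (csSup_le ⟨_, hmem1⟩ hub1) (le_csSup ⟨f ys, hub1⟩ hmem1)
    have hub2 : ∀ ξ ∈ {ξ : ℝ | ∃ (m : ℕ) (as bs : List B), 0 < m ∧ (∀ y ∈ as, y ∈ S) ∧
        (∀ y ∈ bs, y ∈ S) ∧ seqLE as (bs ++ List.replicate m x) ∧
        ξ = ((as.map f).sum - (bs.map f).sum) / m}, ξ ≤ f ys := by
      rintro ξ ⟨m, as, bs, hm, has, hbs, hseq, rfl⟩
      have hseq' := HT.transfer_int hS has hbs hysS hysle hmax hseq
      have hmem : ∀ a ∈ bs ++ List.replicate m ys, a ∈ S := by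
        intro a ha
        rcases List.mem_append.mp ha with h | h
        · exact hbs a h
        · rw [List.eq_of_mem_replicate h]; exact hysS
      have hsum := HT.partial_measure hS hf has hmem hseq'
      rw [List.map_append, List.sum_append, List.map_replicate, List.sum_replicate,
        nsmul_eq_mul] at hsum
      have hm' : (0 : ℝ) < m := by exact_mod_cast hm
      rw [div_le_iff₀ hm']
      linarith
    have hmem2 : f ys ∈ {ξ : ℝ | ∃ (m : ℕ) (as bs : List B), 0 < m ∧ (∀ y ∈ as, y ∈ S) ∧
        (∀ y ∈ bs, y ∈ S) ∧ seqLE as (bs ++ List.replicate m x) ∧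
        ξ = ((as.map f).sum - (bs.map f).sum) / m} := by
      refine ⟨1, [ys], [], Nat.one_pos, by simpa using hysS, by simp, ?_, by simp⟩
      intro k hk
      have hk0 : k = 0 := by simpa using Nat.lt_one_iff.mp (by simpa using hk)
      subst hk0
      simpa [HT.kJoin_one_singleton] using hysle
    rw [h1]
    exact le_antisymm (csSup_le ⟨_, hmem2⟩ hub2) (le_csSup ⟨f ys, hub2⟩ hmem2)
  · obtain ⟨yl, hylS, hyle, hmin⟩ := HT.exists_ylow hS x
    have hlb1 : ∀ r ∈ {r : ℝ | ∃ y ∈ S, x ≤ y ∧ r = f y}, f yl ≤ r := by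
      rintro r ⟨y, hy, hxy, rfl⟩
      exact HT.f_mono hS hf hylS hy (hmin y hy hxy)
    have hmem1 : f yl ∈ {r : ℝ | ∃ y ∈ S, x ≤ y ∧ r = f y} := ⟨yl, hylS, hyle, rfl⟩
    have h1 : sInf {r : ℝ | ∃ y ∈ S, x ≤ y ∧ r = f y} = f yl :=
      le_antisymm (csInf_le ⟨f yl, hlb1⟩ hmem1) (le_csInf ⟨_, hmem1⟩ hlb1)
    have hlb2 : ∀ ξ ∈ {ξ : ℝ | ∃ (m : ℕ) (as bs : List B), 0 < m ∧ (∀ y ∈ as, y ∈ S) ∧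
        (∀ y ∈ bs, y ∈ S) ∧ seqLE (bs ++ List.replicate m x) as ∧
        ξ = ((as.map f).sum - (bs.map f).sum) / m}, f yl ≤ ξ := by
      rintro ξ ⟨m, as, bs, hm, has, hbs, hseq, rfl⟩
      have hseq' := HT.transfer_ext hS has hbs hylS hyle hmin hseq
      have hmem : ∀ a ∈ bs ++ List.replicate m yl, a ∈ S := by
        intro a ha
        rcases List.mem_append.mp ha with h | h
        · exact hbs a h
        · rw [List.eq_of_mem_replicate h]; exact hylS
      have hsum := HT.partial_measure hS hf hmem has hseq'
      rw [List.map_append, List.sum_append, List.map_replicate, List.sum_replicate,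
        nsmul_eq_mul] at hsum
      have hm' : (0 : ℝ) < m := by exact_mod_cast hm
      rw [le_div_iff₀ hm']
      linarith
    have hmem2 : f yl ∈ {ξ : ℝ | ∃ (m : ℕ) (as bs : List B), 0 < m ∧ (∀ y ∈ as, y ∈ S) ∧
        (∀ y ∈ bs, y ∈ S) ∧ seqLE (bs ++ List.replicate m x) as ∧
        ξ = ((as.map f).sum - (bs.map f).sum) / m} := by
      refine ⟨1, [yl], [], Nat.one_pos, by simpa using hylS, by simp, ?_, by simp⟩
      intro k hk
      have hk0 : k = 0 := by simpa using Nat.lt_one_iff.mp (by simpa using hk)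
      subst hk0
      simpa [HT.kJoin_one_singleton] using hyle
    rw [h1]
    exact le_antisymm (csInf_le ⟨f yl, hlb2⟩ hmem2) (le_csInf ⟨_, hmem2⟩ hlb2)
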